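/- Let 𝓑 be a basis of a Banach space X, 𝐧 a strictly increasing sequence of positive integers, and ω a weight on subsets of ℕ. The following are equivalent: (i) 𝓑 is ω-(𝐧, strong partially greedy); (ii) 𝓑 is quasi-greedy and ω-(𝐧, PSLC); (iii) 𝓑 is quasi-greedy and ω-(𝐧, superconservative); (iv) 𝓑 is quasi-greedy and ω-(𝐧, conservative). -/

import Mathlib

open scoped BigOperators ENNReal NNReal

/-- The collection `𝕋(𝐧)`: pairs of finite sets `(A, D)` with `A ⊆ 𝐧`, `|A| ≤ |D|`
and `A < D ∩ 𝐧`. -/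
def TPair (seq : ℕ → ℕ) (A D : Finset ℕ) : Prop :=
  (↑A : Set ℕ) ⊆ Set.range seq ∧ A.card ≤ D.card ∧
    ∀ a ∈ A, ∀ d ∈ D, d ∈ Set.range seq → a < d

/-- The collection `𝕊(𝐧)`: pairs of finite sets `(A, D)` with `A ⊆ 𝐧` and `|A| ≤ |D|`. -/
def SPair (seq : ℕ → ℕ) (A D : Finset ℕ) : Prop :=
  (↑A : Set ℕ) ⊆ Set.range seq ∧ A.card ≤ D.card

/-- The interval `{n_{k+1}, …, n_{k+m}}` of `m` consecutive terms of the sequence `seq`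
(0-indexed: `seq k, …, seq (k+m-1)`). -/
def intervalSet (seq : ℕ → ℕ) (k m : ℕ) : Finset ℕ :=
  (Finset.range m).image fun i => seq (k + i)

/-- The (1-based) index `ι(max A)` of the largest element of `A` in the sequence `seq`
(`0` if `A` is empty). -/
noncomputable def iotaMax (seq : ℕ → ℕ) (A : Finset ℕ) : ℕ :=
  if h : A.Nonempty then sInf {i | seq i = A.max' h} + 1 else 0

/-- The collection `𝕋^ω(𝐧)`: pairs of finite sets `(A, D)` with `A ⊆ 𝐧`, `ω(A) ≤ ω(D)`
and `A < D ∩ 𝐧`. -/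
def WTPair (w : Set ℕ → ℝ≥0∞) (seq : ℕ → ℕ) (A D : Finset ℕ) : Prop :=
  (↑A : Set ℕ) ⊆ Set.range seq ∧ w (↑A : Set ℕ) ≤ w (↑D : Set ℕ) ∧
    ∀ a ∈ A, ∀ d ∈ D, d ∈ Set.range seq → a < d

/-- A (semi-normalized) basis `(e_n)` of a Banach space `X`, together with its biorthogonal
functionals `(e_n^*)`: the span of the `e_n` is norm-dense, `e_j^*(e_k) = δ_{jk}`, and the
norms of the `e_n` and `e_n^*` are bounded above and away from zero. -/
structure BasisOf (𝕜 : Type*) (X : Type*) [RCLike 𝕜] [NormedAddCommGroup X]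
    [NormedSpace 𝕜 X] where
  e : ℕ → X
  coord : ℕ → X →L[𝕜] 𝕜
  dense_span : Dense (↑(Submodule.span 𝕜 (Set.range e)) : Set X)
  biorth : ∀ j k : ℕ, coord j (e k) = if j = k then (1 : 𝕜) else 0
  norm_bounds : ∃ c₁ c₂ : ℝ, 0 < c₁ ∧ (∀ n, c₁ ≤ ‖e n‖ ∧ c₁ ≤ ‖coord n‖) ∧
    ∀ n, ‖e n‖ ≤ c₂ ∧ ‖coord n‖ ≤ c₂

namespace BasisOf

variable {𝕜 : Type*} {X : Type*} [RCLike 𝕜] [NormedAddCommGroup X] [NormedSpace 𝕜 X]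
variable (B : BasisOf 𝕜 X)

/-- The projection `P_A(x) = ∑_{n ∈ A} e_n^*(x) e_n`. -/
noncomputable def proj (A : Finset ℕ) (x : X) : X := ∑ n ∈ A, B.coord n x • B.e n

/-- `1_{εA} = ∑_{n ∈ A} ε_n e_n`. -/
noncomputable def sgnSum (ε : ℕ → 𝕜) (A : Finset ℕ) : X := ∑ n ∈ A, ε n • B.e n

/-- `1_A = ∑_{n ∈ A} e_n`. -/
noncomputable def ones (A : Finset ℕ) : X := ∑ n ∈ A, B.e n

/-- `P^𝐧_m(x) = ∑_{i=1}^m e_{n_i}^*(x) e_{n_i}`, the projection on the first `m` terms of the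
subsequence given by `seq`. -/
noncomputable def projSeq (seq : ℕ → ℕ) (m : ℕ) (x : X) : X :=
  ∑ i ∈ Finset.range m, B.coord (seq i) x • B.e (seq i)

/-- `A` is a greedy set of `x`: the coefficients inside `A` dominate those outside. -/
def IsGreedySet (x : X) (A : Finset ℕ) : Prop :=
  ∀ a ∈ A, ∀ b ∉ A, ‖B.coord b x‖ ≤ ‖B.coord a x‖

/-- The support `{n : e_n^*(x) ≠ 0}`. -/
def supp (x : X) : Set ℕ := {n | B.coord n x ≠ 0}

/-- `𝓑` is `C`-(`𝐧`, strong partially greedy):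
`‖x - G_m(x)‖ ≤ C ⋅ σ̂^𝐧_m(x)` for all `x`, all `m ≥ 1` and all greedy sums. -/
def SPGWith (seq : ℕ → ℕ) (C : ℝ) : Prop :=
  ∀ x : X, ∀ m : ℕ, 1 ≤ m → ∀ A : Finset ℕ, A.card = m → B.IsGreedySet x A →
    ∀ k : ℕ, k ≤ m → ‖x - B.proj A x‖ ≤ C * ‖x - B.projSeq seq k x‖

/-- `𝓑` is (`𝐧`, strong partially greedy). -/
def SPG (seq : ℕ → ℕ) : Prop := ∃ C : ℝ, 1 ≤ C ∧ B.SPGWith seq C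

/-- `𝓑` is quasi-greedy with constant `C`. -/
def QuasiGreedyWith (C : ℝ) : Prop :=
  ∀ x : X, ∀ A : Finset ℕ, A.Nonempty → B.IsGreedySet x A → ‖B.proj A x‖ ≤ C * ‖x‖

/-- `𝓑` is quasi-greedy. -/
def QuasiGreedy : Prop := ∃ C : ℝ, B.QuasiGreedyWith C

/-- `𝓑` is suppression quasi-greedy with constant `C`. -/
def SuppQGWith (C : ℝ) : Prop :=
  ∀ x : X, ∀ A : Finset ℕ, A.Nonempty → B.IsGreedySet x A → ‖x - B.proj A x‖ ≤ C * ‖x‖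

/-- `𝓑` is `C`-(`𝐧`, PSLC). -/
def PSLCWith (seq : ℕ → ℕ) (C : ℝ) : Prop :=
  ∀ x : X, (∀ n, ‖B.coord n x‖ ≤ 1) → ∀ A D : Finset ℕ, TPair seq A D →
    (∀ d ∈ D, B.coord d x = 0) →
    (∀ a ∈ A, ∀ j : ℕ, (j ∈ D ∨ B.coord j x ≠ 0) → j ∈ Set.range seq → a < j) →
    ∀ ε δ : ℕ → 𝕜, (∀ n, ‖ε n‖ = 1) → (∀ n, ‖δ n‖ = 1) →
      ‖x + B.sgnSum ε A‖ ≤ C * ‖x + B.sgnSum δ D‖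

/-- `𝓑` is (`𝐧`, PSLC). -/
def PSLC (seq : ℕ → ℕ) : Prop := ∃ C : ℝ, 1 ≤ C ∧ B.PSLCWith seq C

/-- `𝓑` is (`𝐧`, superconservative) with constant `C`. -/
def SuperconservativeWith (seq : ℕ → ℕ) (C : ℝ) : Prop :=
  ∀ A D : Finset ℕ, TPair seq A D →
    ∀ ε δ : ℕ → 𝕜, (∀ n, ‖ε n‖ = 1) → (∀ n, ‖δ n‖ = 1) →
      ‖B.sgnSum ε A‖ ≤ C * ‖B.sgnSum δ D‖

/-- `𝓑` is (`𝐧`, superconservative). -/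
def Superconservative (seq : ℕ → ℕ) : Prop :=
  ∃ C : ℝ, 0 < C ∧ B.SuperconservativeWith seq C

/-- `𝓑` is (`𝐧`, conservative) with constant `C`. -/
def ConservativeWith (seq : ℕ → ℕ) (C : ℝ) : Prop :=
  ∀ A D : Finset ℕ, TPair seq A D → ‖B.ones A‖ ≤ C * ‖B.ones D‖

/-- `𝓑` is (`𝐧`, conservative). -/
def Conservative (seq : ℕ → ℕ) : Prop := ∃ C : ℝ, 0 < C ∧ B.ConservativeWith seq C

/-- `𝓑` is (`𝐧`, democratic) with constant `C`. -/
def DemocraticWith (seq : ℕ → ℕ) (C : ℝ) : Prop :=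
  ∀ A D : Finset ℕ, SPair seq A D → ‖B.ones A‖ ≤ C * ‖B.ones D‖

/-- `𝓑` is (`𝐧`, democratic). -/
def Democratic (seq : ℕ → ℕ) : Prop := ∃ C : ℝ, B.DemocraticWith seq C

/-- `𝓑` is (`𝐧`, almost greedy) with constant `C`:
`‖x - G_m(x)‖ ≤ C σ̃^𝐧_m(x)` where `σ̃^𝐧_m(x) = inf {‖x - P_D(x)‖ : D ⊆ 𝐧, |D| = m}`. -/
def AlmostGreedyWith (seq : ℕ → ℕ) (C : ℝ) : Prop :=
  ∀ x : X, ∀ m : ℕ, 1 ≤ m → ∀ A : Finset ℕ, A.card = m → B.IsGreedySet x A →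
    ∀ D : Finset ℕ, (↑D : Set ℕ) ⊆ Set.range seq → D.card = m →
      ‖x - B.proj A x‖ ≤ C * ‖x - B.proj D x‖

/-- `𝓑` is (`𝐧`, almost greedy). -/
def AlmostGreedy (seq : ℕ → ℕ) : Prop := ∃ C : ℝ, 1 ≤ C ∧ B.AlmostGreedyWith seq C

/-- `𝓑` is 1-unconditional. -/
def OneUnconditional : Prop :=
  ∀ (F : Finset ℕ) (a b : ℕ → 𝕜), (∀ n, ‖a n‖ ≤ ‖b n‖) →
    ‖∑ n ∈ F, a n • B.e n‖ ≤ ‖∑ n ∈ F, b n • B.e n‖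

/-- `𝓑` is `C`-(`𝐧`, consecutive almost greedy) of type I. -/
def CAGIWith (seq : ℕ → ℕ) (C : ℝ) : Prop :=
  ∀ x : X, ∀ m : ℕ, 1 ≤ m → ∀ A : Finset ℕ, A.card = m → B.IsGreedySet x A →
    ∀ k : ℕ, ‖x - B.proj A x‖ ≤ C * ‖x - B.proj (intervalSet seq k m) x‖

/-- `𝓑` is `C`-(`𝐧`, consecutive almost greedy) of type II. -/
def CAGIIWith (seq : ℕ → ℕ) (C : ℝ) : Prop :=
  ∀ x : X, ∀ m : ℕ, 1 ≤ m → ∀ A : Finset ℕ, A.card = m → B.IsGreedySet x A →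
    ∀ k p : ℕ, ((↑(intervalSet seq k p) : Set ℕ) ∩ B.supp x).ncard ≤ m →
      ‖x - B.proj A x‖ ≤ C * ‖x - B.proj (intervalSet seq k p) x‖

/-- `𝓑` is `C`-(`𝐧`, RSLC). -/
def RSLCWith (seq : ℕ → ℕ) (C : ℝ) : Prop :=
  ∀ x : X, (∀ n, ‖B.coord n x‖ ≤ 1) → ∀ A D : Finset ℕ, SPair seq A D →
    (∀ d ∈ D, B.coord d x = 0) →
    (∀ j : ℕ, (j ∈ D ∨ B.coord j x ≠ 0) → j ∈ Set.range seq →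
      (∀ a ∈ A, j < a) ∨ (∀ a ∈ A, a < j)) →
    ∀ ε δ : ℕ → 𝕜, (∀ n, ‖ε n‖ = 1) → (∀ n, ‖δ n‖ = 1) →
      ‖x + B.sgnSum ε A‖ ≤ C * ‖x + B.sgnSum δ D‖

/-- `𝓑` is `C`-(`𝐧`, SLC). -/
def SLCWith (seq : ℕ → ℕ) (C : ℝ) : Prop :=
  ∀ x : X, (∀ n, ‖B.coord n x‖ ≤ 1) → ∀ A D : Finset ℕ, SPair seq A D →
    Disjoint A D → (∀ a ∈ A, B.coord a x = 0) → (∀ d ∈ D, B.coord d x = 0) →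
    ∀ ε δ : ℕ → 𝕜, (∀ n, ‖ε n‖ = 1) → (∀ n, ‖δ n‖ = 1) →
      ‖x + B.sgnSum ε A‖ ≤ C * ‖x + B.sgnSum δ D‖

/-- The Lebesgue-type parameter `L̂^𝐧_m`: the least constant `C ∈ [0,∞]` with
`‖x - G_m(x)‖ ≤ C σ̂^𝐧_m(x)` for all `x` and all greedy sums `G_m(x)`. -/
noncomputable def Lhat (seq : ℕ → ℕ) (m : ℕ) : ℝ≥0∞ :=
  sInf {C : ℝ≥0∞ | ∀ (x : X) (A : Finset ℕ), A.card = m → B.IsGreedySet x A →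
    ∀ k : ℕ, k ≤ m →
      (‖x - B.proj A x‖₊ : ℝ≥0∞) ≤ C * (‖x - B.projSeq seq k x‖₊ : ℝ≥0∞)}

/-- The parameter `g_m^c`. -/
noncomputable def gc (m : ℕ) : ℝ≥0∞ :=
  ⨆ (x : X) (_ : x ≠ 0) (A : Finset ℕ) (_ : A.card ≤ m) (_ : B.IsGreedySet x A),
    (‖x - B.proj A x‖₊ : ℝ≥0∞) / (‖x‖₊ : ℝ≥0∞)

/-- The parameter `g̃_m`. -/
noncomputable def gtilde (m : ℕ) : ℝ≥0∞ :=
  ⨆ (x : X) (_ : x ≠ 0) (A : Finset ℕ) (A' : Finset ℕ) (_ : A ⊆ A') (_ : A.card < A'.card)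
    (_ : A'.card ≤ m) (_ : B.IsGreedySet x A) (_ : B.IsGreedySet x A'),
    (‖B.proj A' x - B.proj A x‖₊ : ℝ≥0∞) / (‖x‖₊ : ℝ≥0∞)

/-- The parameter `sc^𝐧_m`. -/
noncomputable def scParam (seq : ℕ → ℕ) (m : ℕ) : ℝ≥0∞ :=
  ⨆ (A : Finset ℕ) (D : Finset ℕ) (_ : TPair seq A D) (_ : D.card ≤ m)
    (_ : ∀ a ∈ A, a ≤ seq (m - 1)) (ε : ℕ → 𝕜) (_ : ∀ n, ‖ε n‖ = 1)
    (δ : ℕ → 𝕜) (_ : ∀ n, ‖δ n‖ = 1),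
    (‖B.sgnSum ε A‖₊ : ℝ≥0∞) / (‖B.sgnSum δ D‖₊ : ℝ≥0∞)

/-- The parameter `ω^𝐧_m`. -/
noncomputable def omegaParam (seq : ℕ → ℕ) (m : ℕ) : ℝ≥0∞ :=
  ⨆ (x : X) (_ : ∀ n, ‖B.coord n x‖ ≤ 1) (A : Finset ℕ) (D : Finset ℕ)
    (_ : (↑A : Set ℕ) ⊆ Set.range seq) (_ : A.card ≤ D.card) (_ : D.card ≤ m)
    (_ : ∀ a ∈ A, a ≤ seq (m - 1)) (_ : ∀ d ∈ D, B.coord d x = 0)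
    (_ : ∀ a ∈ A, ∀ j : ℕ, (j ∈ D ∨ B.coord j x ≠ 0) → j ∈ Set.range seq → a < j)
    (ε : ℕ → 𝕜) (_ : ∀ n, ‖ε n‖ = 1) (δ : ℕ → 𝕜) (_ : ∀ n, ‖δ n‖ = 1),
    (‖x + B.sgnSum ε A‖₊ : ℝ≥0∞) / (‖x + B.sgnSum δ D‖₊ : ℝ≥0∞)

/-- The parameter `ω̂^𝐧_m`. -/
noncomputable def omegaHatParam (seq : ℕ → ℕ) (m : ℕ) : ℝ≥0∞ :=
  ⨆ (x : X) (_ : ∀ n, ‖B.coord n x‖ ≤ 1) (A : Finset ℕ) (D : Finset ℕ)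
    (_ : (↑A : Set ℕ) ⊆ Set.range seq) (_ : A.card ≤ D.card) (_ : D.card ≤ m)
    (_ : ∀ a ∈ A, a ≤ seq (m - 1))
    (_ : ∀ d ∈ D, B.coord d (x - B.proj A x) = 0)
    (_ : ∀ a ∈ A, ∀ j : ℕ, (j ∈ D ∨ B.coord j (x - B.proj A x) ≠ 0) →
      j ∈ Set.range seq → a < j)
    (ε : ℕ → 𝕜) (_ : ∀ n, ‖ε n‖ = 1),
    (‖x‖₊ : ℝ≥0∞) / (‖x - B.proj A x + B.sgnSum ε D‖₊ : ℝ≥0∞)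

/-- `κ = sup_{j,k} ‖e_j‖ ‖e_k^*‖`. -/
noncomputable def kappa : ℝ≥0∞ :=
  ⨆ (j : ℕ) (k : ℕ), ((‖B.e j‖₊ * ‖B.coord k‖₊ : ℝ≥0) : ℝ≥0∞)

/-- `𝓑` is `𝐬`-(`𝐧`, strong partially greedy) with constant `C`:
the strong partially greedy inequality for all orders `m` in the sequence `s`. -/
def SPGOnWith (seq : ℕ → ℕ) (s : ℕ → ℕ) (C : ℝ) : Prop :=
  ∀ x : X, ∀ i : ℕ, ∀ A : Finset ℕ, A.card = s i → B.IsGreedySet x A →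
    ∀ k : ℕ, k ≤ s i → ‖x - B.proj A x‖ ≤ C * ‖x - B.projSeq seq k x‖

/-- `𝓑` is (`λ`, `𝐧`, strong partially greedy). -/
def LamSPG (seq : ℕ → ℕ) (lam : ℝ) : Prop :=
  ∃ C : ℝ, 1 ≤ C ∧ ∀ x : X, ∀ m : ℕ, 1 ≤ m →
    ∀ A : Finset ℕ, A.card = ⌈lam * (m : ℝ)⌉₊ → B.IsGreedySet x A →
      ∀ k : ℕ, k ≤ m → ‖x - B.proj A x‖ ≤ C * ‖x - B.projSeq seq k x‖

/-- `𝓑` is (`λ`, `𝐧`, PSLC). -/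
def LamPSLC (seq : ℕ → ℕ) (lam : ℝ) : Prop :=
  ∃ C : ℝ, 1 ≤ C ∧ ∀ x : X, (∀ n, ‖B.coord n x‖ ≤ 1) →
    ∀ A D : Finset ℕ, (↑A : Set ℕ) ⊆ Set.range seq → A.card ≤ D.card →
      (lam - 1) * (iotaMax seq A : ℝ) + A.card ≤ D.card →
      (∀ d ∈ D, B.coord d x = 0) →
      (∀ a ∈ A, ∀ j : ℕ, (j ∈ D ∨ B.coord j x ≠ 0) → j ∈ Set.range seq → a < j) →
      ∀ ε δ : ℕ → 𝕜, (∀ n, ‖ε n‖ = 1) → (∀ n, ‖δ n‖ = 1) →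
        ‖x + B.sgnSum ε A‖ ≤ C * ‖x + B.sgnSum δ D‖

/-- `𝓑` is (`λ`, `𝐧`, superconservative). -/
def LamSuperconservative (seq : ℕ → ℕ) (lam : ℝ) : Prop :=
  ∃ C : ℝ, 0 < C ∧ ∀ A D : Finset ℕ, TPair seq A D →
    (lam - 1) * (iotaMax seq A : ℝ) + A.card ≤ D.card →
    ∀ ε δ : ℕ → 𝕜, (∀ n, ‖ε n‖ = 1) → (∀ n, ‖δ n‖ = 1) →
      ‖B.sgnSum ε A‖ ≤ C * ‖B.sgnSum δ D‖

/-- `𝓑` is (`λ`, `𝐧`, conservative). -/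
def LamConservative (seq : ℕ → ℕ) (lam : ℝ) : Prop :=
  ∃ C : ℝ, 0 < C ∧ ∀ A D : Finset ℕ, TPair seq A D →
    (lam - 1) * (iotaMax seq A : ℝ) + A.card ≤ D.card →
    ‖B.ones A‖ ≤ C * ‖B.ones D‖

/-- `𝓑` is `ω`-(`𝐧`, strong partially greedy) for the weight on sets `w`. -/
def WSPG (seq : ℕ → ℕ) (w : Set ℕ → ℝ≥0∞) : Prop :=
  ∃ C : ℝ, 1 ≤ C ∧ ∀ x : X, ∀ m : ℕ, 1 ≤ m → ∀ A : Finset ℕ, A.card = m →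
    B.IsGreedySet x A → ∀ m' : ℕ,
      w (↑((Finset.range m').image seq \ A) : Set ℕ) ≤
        w (↑(A \ (Finset.range m').image seq) : Set ℕ) →
      ‖x - B.proj A x‖ ≤ C * ‖x - B.proj ((Finset.range m').image seq) x‖

/-- `𝓑` is `ω`-(`𝐧`, PSLC). -/
def WPSLC (seq : ℕ → ℕ) (w : Set ℕ → ℝ≥0∞) : Prop :=
  ∃ C : ℝ, 1 ≤ C ∧ ∀ x : X, (∀ n, ‖B.coord n x‖ ≤ 1) →
    ∀ A D : Finset ℕ, WTPair w seq A D →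
      (∀ d ∈ D, B.coord d x = 0) →
      (∀ a ∈ A, ∀ j : ℕ, (j ∈ D ∨ B.coord j x ≠ 0) → j ∈ Set.range seq → a < j) →
      ∀ ε δ : ℕ → 𝕜, (∀ n, ‖ε n‖ = 1) → (∀ n, ‖δ n‖ = 1) →
        ‖x + B.sgnSum ε A‖ ≤ C * ‖x + B.sgnSum δ D‖

/-- `𝓑` is `ω`-(`𝐧`, superconservative). -/
def WSuperconservative (seq : ℕ → ℕ) (w : Set ℕ → ℝ≥0∞) : Prop :=
  ∃ C : ℝ, 0 < C ∧ ∀ A D : Finset ℕ, WTPair w seq A D →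
    ∀ ε δ : ℕ → 𝕜, (∀ n, ‖ε n‖ = 1) → (∀ n, ‖δ n‖ = 1) →
      ‖B.sgnSum ε A‖ ≤ C * ‖B.sgnSum δ D‖

/-- `𝓑` is `ω`-(`𝐧`, conservative). -/
def WConservative (seq : ℕ → ℕ) (w : Set ℕ → ℝ≥0∞) : Prop :=
  ∃ C : ℝ, 0 < C ∧ ∀ A D : Finset ℕ, WTPair w seq A D → ‖B.ones A‖ ≤ C * ‖B.ones D‖

end BasisOf

/-- A Banach space over `𝕜` equipped with a basis. -/
structure BanachWithBasis (𝕜 : Type*) [RCLike 𝕜] where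
  carrier : Type
  [grp : NormedAddCommGroup carrier]
  [mod : NormedSpace 𝕜 carrier]
  [comp : CompleteSpace carrier]
  basis : BasisOf 𝕜 carrier

attribute [instance] BanachWithBasis.grp BanachWithBasis.mod BanachWithBasis.comp


section Aux

variable {𝕜 : Type*} {X : Type*} [RCLike 𝕜] [NormedAddCommGroup X] [NormedSpace 𝕜 X]

lemma s19_norm_I_le : ‖(RCLike.I : 𝕜)‖ ≤ 1 := by
  rcases (RCLike.I_mul_I_ax (K := 𝕜)) with h | h
  · simp [h]
  · have h2 : ‖(RCLike.I : 𝕜)‖ * ‖(RCLike.I : 𝕜)‖ = 1 := by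
      rw [← norm_mul, h, norm_neg, norm_one]
    nlinarith [norm_nonneg (RCLike.I : 𝕜)]

lemma s19_anti_core (v : ℕ → X) (key : ℕ → ℝ) (M : ℝ) (hM : 0 ≤ M) :
    ∀ S : Finset ℕ, ∀ β : ℝ, 0 ≤ β →
      (∀ T ⊆ S, (∀ n ∈ T, ∀ m ∈ S, m ∉ T → key n ≤ key m) → ‖∑ n ∈ T, v n‖ ≤ M) →
      ∀ t : ℕ → ℝ, (∀ n ∈ S, 0 ≤ t n ∧ t n ≤ β) →
      (∀ n ∈ S, ∀ m ∈ S, key n ≤ key m → t m ≤ t n) →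
      ‖∑ n ∈ S, ((t n : ℝ) : 𝕜) • v n‖ ≤ β * M := by
  intro S
  induction S using Finset.strongInduction with
  | _ S ih =>
  intro β hβ hbound t ht hanti
  rcases S.eq_empty_or_nonempty with rfl | hS
  · simpa using by positivity
  obtain ⟨n₀, hn₀, hmin⟩ := Finset.exists_min_image S t hS
  set τ := t n₀ with hτ
  have hτ0 : 0 ≤ τ := (ht n₀ hn₀).1
  have hτβ : τ ≤ β := (ht n₀ hn₀).2
  set S' := S.filter (fun n => τ < t n) with hS'def
  have hsub : S' ⊆ S := Finset.filter_subset _ _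
  have hss : S' ⊂ S := by
    refine (Finset.ssubset_iff_of_subset hsub).2 ⟨n₀, hn₀, ?_⟩
    simp [hS'def]
    exact fun _ => le_rfl
  have hzero : ∀ n ∈ S, n ∉ S' → ((t n - τ : ℝ) : 𝕜) • v n = 0 := by
    intro n hn hn'
    have h1 : ¬ τ < t n := fun h => hn' (Finset.mem_filter.2 ⟨hn, h⟩)
    have h2 : t n = τ := le_antisymm (not_lt.1 h1) (hmin n hn)
    simp [h2]
  have hsplit : ∑ n ∈ S, ((t n : ℝ) : 𝕜) • v n
      = (∑ n ∈ S', ((t n - τ : ℝ) : 𝕜) • v n) + ((τ : ℝ) : 𝕜) • ∑ n ∈ S, v n := by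
    rw [Finset.smul_sum, Finset.sum_subset hsub hzero, ← Finset.sum_add_distrib]
    refine Finset.sum_congr rfl fun n hn => ?_
    rw [← add_smul]
    congr 1
    push_cast
    ring
  rw [hsplit]
  have h1 : ‖∑ n ∈ S', ((t n - τ : ℝ) : 𝕜) • v n‖ ≤ (β - τ) * M := by
    have := ih S' hss (β - τ) (by linarith) ?_ (fun n => t n - τ) ?_ ?_
    · exact this
    · intro T hT hlow
      refine hbound T (hT.trans hsub) ?_
      intro n hn m hm hmT
      by_cases hm' : m ∈ S'
      · exact hlow n hn m hm' hmT
      · by_contra hk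
        push_neg at hk
        have h2 : t n ≤ t m := hanti m hm n (hsub (hT hn)) hk.le
        have h3 : t m ≤ τ := not_lt.1 fun h => hm' (Finset.mem_filter.2 ⟨hm, h⟩)
        have h4 : τ < t n := (Finset.mem_filter.1 (hT hn)).2
        linarith
    · intro n hn
      have h4 : τ < t n := (Finset.mem_filter.1 hn).2
      exact ⟨by linarith, by linarith [(ht n (hsub hn)).2]⟩
    · intro n hn m hm hk
      have := hanti n (hsub hn) m (hsub hm) hk
      linarith
  have h2 : ‖((τ : ℝ) : 𝕜) • ∑ n ∈ S, v n‖ ≤ τ * M := by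
    rw [norm_smul, RCLike.norm_ofReal, abs_of_nonneg hτ0]
    exact mul_le_mul_of_nonneg_left
      (hbound S le_rfl (fun n hn m hm hmS => absurd hm hmS)) hτ0
  calc ‖_ + _‖ ≤ _ + _ := norm_add_le _ _
    _ ≤ (β - τ) * M + τ * M := add_le_add h1 h2
    _ = β * M := by ring

lemma s19_mult_complex (v : ℕ → X) (S : Finset ℕ) (M : ℝ) (hM : 0 ≤ M)
    (hb : ∀ T ⊆ S, ‖∑ n ∈ T, v n‖ ≤ M) (d : ℕ → 𝕜) (hd : ∀ n ∈ S, ‖d n‖ ≤ 1) :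
    ‖∑ n ∈ S, d n • v n‖ ≤ 4 * M := by
  set r1 : ℕ → ℝ := fun n => (|RCLike.re (d n)| + RCLike.re (d n)) / 2 with hr1
  set r2 : ℕ → ℝ := fun n => (|RCLike.re (d n)| - RCLike.re (d n)) / 2 with hr2
  set r3 : ℕ → ℝ := fun n => (|RCLike.im (d n)| + RCLike.im (d n)) / 2 with hr3
  set r4 : ℕ → ℝ := fun n => (|RCLike.im (d n)| - RCLike.im (d n)) / 2 with hr4
  have key : ∀ r : ℕ → ℝ, (∀ n ∈ S, 0 ≤ r n ∧ r n ≤ 1) →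
      ‖∑ n ∈ S, ((r n : ℝ) : 𝕜) • v n‖ ≤ M := by
    intro r hr
    have := s19_anti_core (𝕜 := 𝕜) v (fun n => -(r n)) M hM S 1 zero_le_one
      (fun T hT _ => hb T hT) r hr (fun n _ m _ h => by simpa using h)
    simpa using this
  have hre : ∀ n ∈ S, |RCLike.re (d n)| ≤ 1 :=
    fun n hn => (RCLike.abs_re_le_norm (d n)).trans (hd n hn)
  have him : ∀ n ∈ S, |RCLike.im (d n)| ≤ 1 :=
    fun n hn => (RCLike.abs_im_le_norm (d n)).trans (hd n hn)
  have hb1 : ∀ n ∈ S, 0 ≤ r1 n ∧ r1 n ≤ 1 := fun n hn => by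
    have := hre n hn; have := abs_nonneg (RCLike.re (d n))
    have := neg_abs_le (RCLike.re (d n)); have := le_abs_self (RCLike.re (d n))
    constructor <;> simp only [hr1] <;> linarith
  have hb2 : ∀ n ∈ S, 0 ≤ r2 n ∧ r2 n ≤ 1 := fun n hn => by
    have := hre n hn; have := abs_nonneg (RCLike.re (d n))
    have := neg_abs_le (RCLike.re (d n)); have := le_abs_self (RCLike.re (d n))
    constructor <;> simp only [hr2] <;> linarith
  have hb3 : ∀ n ∈ S, 0 ≤ r3 n ∧ r3 n ≤ 1 := fun n hn => by
    have := him n hn; have := abs_nonneg (RCLike.im (d n))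
    have := neg_abs_le (RCLike.im (d n)); have := le_abs_self (RCLike.im (d n))
    constructor <;> simp only [hr3] <;> linarith
  have hb4 : ∀ n ∈ S, 0 ≤ r4 n ∧ r4 n ≤ 1 := fun n hn => by
    have := him n hn; have := abs_nonneg (RCLike.im (d n))
    have := neg_abs_le (RCLike.im (d n)); have := le_abs_self (RCLike.im (d n))
    constructor <;> simp only [hr4] <;> linarith
  have hdecomp : ∑ n ∈ S, d n • v n
      = ((∑ n ∈ S, ((r1 n : ℝ) : 𝕜) • v n) - ∑ n ∈ S, ((r2 n : ℝ) : 𝕜) • v n)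
        + (RCLike.I : 𝕜) • ((∑ n ∈ S, ((r3 n : ℝ) : 𝕜) • v n) - ∑ n ∈ S, ((r4 n : ℝ) : 𝕜) • v n) := by
    rw [smul_sub, Finset.smul_sum, Finset.smul_sum, ← Finset.sum_sub_distrib,
      ← Finset.sum_sub_distrib, ← Finset.sum_add_distrib]
    refine Finset.sum_congr rfl fun n hn => ?_
    have er : r1 n - r2 n = RCLike.re (d n) := by simp only [hr1, hr2]; ring
    have ei : r3 n - r4 n = RCLike.im (d n) := by simp only [hr3, hr4]; ring
    have hsc : d n = (((r1 n : ℝ) : 𝕜) - ((r2 n : ℝ) : 𝕜))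
        + RCLike.I * (((r3 n : ℝ) : 𝕜) - ((r4 n : ℝ) : 𝕜)) := by
      rw [← RCLike.ofReal_sub, ← RCLike.ofReal_sub, er, ei, mul_comm, RCLike.re_add_im]
    rw [hsc]
    rw [add_smul]
    rw [sub_smul]
    rw [mul_smul]
    rw [sub_smul]
    rw [smul_sub]
  rw [hdecomp]
  have hI : ‖(RCLike.I : 𝕜)‖ ≤ 1 := s19_norm_I_le
  have k1 := key r1 hb1
  have k2 := key r2 hb2
  have k3 := key r3 hb3
  have k4 := key r4 hb4
  have hs : ‖(RCLike.I : 𝕜) • ((∑ n ∈ S, ((r3 n : ℝ) : 𝕜) • v n) - ∑ n ∈ S, ((r4 n : ℝ) : 𝕜) • v n)‖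
      ≤ 2 * M := by
    rw [norm_smul]
    calc ‖(RCLike.I : 𝕜)‖ * ‖_‖ ≤ 1 * (M + M) := by
          refine mul_le_mul hI ?_ (norm_nonneg _) zero_le_one
          exact (norm_sub_le _ _).trans (add_le_add k3 k4)
      _ = 2 * M := by ring
  calc ‖_ + _‖ ≤ _ + _ := norm_add_le _ _
    _ ≤ (M + M) + 2 * M := add_le_add ((norm_sub_le _ _).trans (add_le_add k1 k2)) hs
    _ = 4 * M := by ring

end Aux

section Aux2

variable {𝕜 : Type*} {X : Type*} [RCLike 𝕜] [NormedAddCommGroup X] [NormedSpace 𝕜 X]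
variable (B : BasisOf 𝕜 X)

lemma s19_coord_sum_smul (c : ℕ → 𝕜) (F : Finset ℕ) (n : ℕ) :
    B.coord n (∑ m ∈ F, c m • B.e m) = if n ∈ F then c n else 0 := by
  rw [map_sum]
  simp only [map_smul, B.biorth, smul_eq_mul, mul_ite, mul_one, mul_zero]
  exact Finset.sum_ite_eq F n c

lemma s19_coord_proj (A : Finset ℕ) (x : X) (n : ℕ) :
    B.coord n (B.proj A x) = if n ∈ A then B.coord n x else 0 :=
  s19_coord_sum_smul B _ A n

lemma s19_coord_sgnSum (ε : ℕ → 𝕜) (A : Finset ℕ) (n : ℕ) :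
    B.coord n (B.sgnSum ε A) = if n ∈ A then ε n else 0 :=
  s19_coord_sum_smul B ε A n

lemma s19_ones_eq (A : Finset ℕ) : B.ones A = ∑ n ∈ A, (1 : 𝕜) • B.e n := by
  simp [BasisOf.ones]

lemma s19_coord_ones (A : Finset ℕ) (n : ℕ) :
    B.coord n (B.ones A) = if n ∈ A then 1 else 0 := by
  rw [s19_ones_eq]; exact s19_coord_sum_smul B _ A n

lemma s19_coord_sub_proj (x : X) (Bs : Finset ℕ) (n : ℕ) :
    B.coord n (x - B.proj Bs x) = if n ∈ Bs then 0 else B.coord n x := by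
  rw [map_sub, s19_coord_proj]
  split <;> simp

lemma s19_proj_union (S T : Finset ℕ) (h : Disjoint S T) (x : X) :
    B.proj (S ∪ T) x = B.proj S x + B.proj T x :=
  Finset.sum_union h

lemma s19_projG_le {K : ℝ} (hQ : B.QuasiGreedyWith K) (hK : 1 ≤ K) (z : X) (S : Finset ℕ)
    (hS : B.IsGreedySet z S) : ‖B.proj S z‖ ≤ K * ‖z‖ := by
  rcases S.eq_empty_or_nonempty with rfl | hne
  · simp only [BasisOf.proj, Finset.sum_empty, norm_zero]
    positivity
  · exact hQ z S hne hS

lemma s19_flat_subset {K : ℝ} (hQ : B.QuasiGreedyWith K) (hK : 1 ≤ K) (c : ℕ → 𝕜)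
    (F T : Finset ℕ) (hc : ∀ n ∈ F, ‖c n‖ = 1) (hT : T ⊆ F) :
    ‖∑ n ∈ T, c n • B.e n‖ ≤ K * ‖∑ n ∈ F, c n • B.e n‖ := by
  set z := ∑ n ∈ F, c n • B.e n with hz
  have hcoord : ∀ n, B.coord n z = if n ∈ F then c n else 0 :=
    fun n => s19_coord_sum_smul B c F n
  have hg : B.IsGreedySet z T := by
    intro a ha b hb
    rw [hcoord, hcoord]
    have ha' : a ∈ F := hT ha
    simp only [ha', if_true]
    rw [hc a ha']
    split
    · exact le_of_eq (hc b ‹_›)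
    · simp
  have hproj : B.proj T z = ∑ n ∈ T, c n • B.e n := by
    refine Finset.sum_congr rfl fun n hn => ?_
    rw [hcoord]
    simp [hT hn]
  have h := s19_projG_le B hQ hK z T hg
  rwa [hproj] at h

lemma s19_sign_exchange {K : ℝ} (hQ : B.QuasiGreedyWith K) (hK : 1 ≤ K) (F : Finset ℕ)
    (c d : ℕ → 𝕜) (hc : ∀ n ∈ F, ‖c n‖ = 1) (hd : ∀ n ∈ F, ‖d n‖ = 1) :
    ‖∑ n ∈ F, d n • B.e n‖ ≤ (4 * K) * ‖∑ n ∈ F, c n • B.e n‖ := by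
  have hM : 0 ≤ K * ‖∑ n ∈ F, c n • B.e n‖ := by positivity
  have hb : ∀ T ⊆ F, ‖∑ n ∈ T, c n • B.e n‖ ≤ K * ‖∑ n ∈ F, c n • B.e n‖ :=
    fun T hT => s19_flat_subset B hQ hK c F T hc hT
  have hd' : ∀ n ∈ F, ‖d n * (c n)⁻¹‖ ≤ 1 := by
    intro n hn
    rw [norm_mul, norm_inv, hc n hn, hd n hn]
    norm_num
  have h := s19_mult_complex (fun n => c n • B.e n) F _ hM hb (fun n => d n * (c n)⁻¹) hd'
  have hrw : ∑ n ∈ F, (d n * (c n)⁻¹) • (c n • B.e n) = ∑ n ∈ F, d n • B.e n := by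
    refine Finset.sum_congr rfl fun n hn => ?_
    rw [smul_smul]
    congr 1
    have hcn : c n ≠ 0 := by
      intro h0
      have := hc n hn
      rw [h0, norm_zero] at this
      norm_num at this
    field_simp
  rw [hrw] at h
  calc ‖∑ n ∈ F, d n • B.e n‖ ≤ 4 * (K * ‖∑ n ∈ F, c n • B.e n‖) := h
    _ = (4 * K) * ‖∑ n ∈ F, c n • B.e n‖ := by ring

lemma s19_upper_flat {K : ℝ} (hQ : B.QuasiGreedyWith K) (hK : 1 ≤ K) (c : ℕ → 𝕜)
    (E : Finset ℕ) (α : ℝ) (hα : 0 ≤ α) (hc : ∀ n ∈ E, ‖c n‖ ≤ α) :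
    ‖∑ n ∈ E, c n • B.e n‖ ≤ 4 * K * α * ‖B.ones E‖ := by
  rcases eq_or_lt_of_le hα with h0 | h0
  · have hz : ∀ n ∈ E, c n • B.e n = 0 := by
      intro n hn
      have h1 : ‖c n‖ ≤ 0 := by rw [h0]; exact hc n hn
      have : c n = 0 := norm_le_zero_iff.1 h1
      simp [this]
    rw [Finset.sum_eq_zero hz, norm_zero, ← h0]
    simp
  · have hones : B.ones E = ∑ n ∈ E, (1 : 𝕜) • B.e n := s19_ones_eq B E
    have hb : ∀ T ⊆ E, ‖∑ n ∈ T, (1 : 𝕜) • B.e n‖ ≤ K * ‖∑ n ∈ E, (1 : 𝕜) • B.e n‖ :=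
      fun T hT => s19_flat_subset B hQ hK (fun _ => 1) E T (by simp) hT
    have hM : 0 ≤ K * ‖∑ n ∈ E, (1 : 𝕜) • B.e n‖ := by positivity
    have hd' : ∀ n ∈ E, ‖c n * ((α : ℝ) : 𝕜)⁻¹‖ ≤ 1 := by
      intro n hn
      rw [norm_mul, norm_inv, RCLike.norm_ofReal, abs_of_pos h0, ← div_eq_mul_inv,
        div_le_one h0]
      exact hc n hn
    have h := s19_mult_complex (fun n => (1 : 𝕜) • B.e n) E _ hM hb
      (fun n => c n * ((α : ℝ) : 𝕜)⁻¹) hd'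
    have hα' : ((α : ℝ) : 𝕜) ≠ 0 := by
      simp only [ne_eq, RCLike.ofReal_eq_zero]
      exact ne_of_gt h0
    have hrw : ∑ n ∈ E, c n • B.e n
        = ((α : ℝ) : 𝕜) • ∑ n ∈ E, (c n * ((α : ℝ) : 𝕜)⁻¹) • ((1 : 𝕜) • B.e n) := by
      rw [Finset.smul_sum]
      refine Finset.sum_congr rfl fun n hn => ?_
      rw [one_smul, smul_smul]
      congr 1
      field_simp
    rw [hrw, norm_smul, RCLike.norm_ofReal, abs_of_pos h0]
    calc α * ‖∑ n ∈ E, (c n * ((α : ℝ) : 𝕜)⁻¹) • ((1 : 𝕜) • B.e n)‖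
        ≤ α * (4 * (K * ‖∑ n ∈ E, (1 : 𝕜) • B.e n‖)) := mul_le_mul_of_nonneg_left h hα
      _ = 4 * K * α * ‖B.ones E‖ := by rw [hones]; ring

lemma s19_trunc_bound {K : ℝ} (hQ : B.QuasiGreedyWith K) (hK : 1 ≤ K) (z : X)
    (G : Finset ℕ) (hG : B.IsGreedySet z G) (α : ℝ) (hα : 0 ≤ α)
    (hc : ∀ n ∈ G, α ≤ ‖B.coord n z‖) :
    α * ‖B.ones G‖ ≤ 8 * K ^ 2 * ‖z‖ := by
  rcases eq_or_lt_of_le hα with h0 | h0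
  · rw [← h0, zero_mul]
    positivity
  have hne : ∀ n ∈ G, B.coord n z ≠ 0 := by
    intro n hn h
    have := hc n hn
    rw [h, norm_zero] at this
    linarith
  set ε : ℕ → 𝕜 := fun n => ((‖B.coord n z‖ : ℝ) : 𝕜)⁻¹ * B.coord n z with hε
  have hεnorm : ∀ n ∈ G, ‖ε n‖ = 1 := by
    intro n hn
    rw [hε]
    simp only [norm_mul, norm_inv, RCLike.norm_ofReal, abs_norm]
    rw [inv_mul_cancel₀ (norm_ne_zero_iff.2 (hne n hn))]
  have hbound : ∀ T ⊆ G, (∀ n ∈ T, ∀ m ∈ G, m ∉ T → ‖B.coord n z‖ ≤ ‖B.coord m z‖) →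
      ‖∑ n ∈ T, B.coord n z • B.e n‖ ≤ 2 * K * ‖z‖ := by
    intro T hT hlow
    have hGT : B.IsGreedySet z (G \ T) := by
      intro a ha b hb
      rcases Finset.mem_sdiff.1 ha with ⟨haG, haT⟩
      by_cases hbG : b ∈ G
      · have hbT : b ∈ T := by
          by_contra h
          exact hb (Finset.mem_sdiff.2 ⟨hbG, h⟩)
        exact hlow b hbT a haG haT
      · exact hG a haG b hbG
    have h1 : B.proj G z = B.proj (G \ T) z + B.proj T z := by
      have hu : G \ T ∪ T = G := Finset.sdiff_union_of_subset hT
      have hd : Disjoint (G \ T) T := Finset.sdiff_disjoint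
      rw [← s19_proj_union B _ _ hd, hu]
    have h2 := s19_projG_le B hQ hK z G hG
    have h3 := s19_projG_le B hQ hK z (G \ T) hGT
    have h4 : ∑ n ∈ T, B.coord n z • B.e n = B.proj G z - B.proj (G \ T) z := by
      rw [h1]; show B.proj T z = _; abel
    rw [h4]
    calc ‖B.proj G z - B.proj (G \ T) z‖ ≤ ‖B.proj G z‖ + ‖B.proj (G \ T) z‖ :=
        norm_sub_le _ _
      _ ≤ K * ‖z‖ + K * ‖z‖ := add_le_add h2 h3
      _ = 2 * K * ‖z‖ := by ring
  have step1 := s19_anti_core (𝕜 := 𝕜) (fun n => B.coord n z • B.e n)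
    (fun n => ‖B.coord n z‖) (2 * K * ‖z‖) (by positivity) G 1 zero_le_one hbound
    (fun n => α * ‖B.coord n z‖⁻¹) ?_ ?_
  rotate_left
  · intro n hn
    have h1 : 0 < ‖B.coord n z‖ := lt_of_lt_of_le h0 (hc n hn)
    constructor
    · positivity
    · 
      rw [← div_eq_mul_inv, div_le_one h1]
      exact hc n hn
  · intro n hn m hm hk
    have h1 : 0 < ‖B.coord n z‖ := lt_of_lt_of_le h0 (hc n hn)
    gcongr
  have hrw : ∑ n ∈ G, ((α * ‖B.coord n z‖⁻¹ : ℝ) : 𝕜) • (B.coord n z • B.e n)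
      = ((α : ℝ) : 𝕜) • ∑ n ∈ G, ε n • B.e n := by
    rw [Finset.smul_sum]
    refine Finset.sum_congr rfl fun n hn => ?_
    rw [smul_smul, smul_smul, hε]
    congr 1
    push_cast
    ring
  rw [hrw, one_mul, norm_smul, RCLike.norm_ofReal, abs_of_pos h0] at step1
  have step2 : ‖B.ones G‖ ≤ (4 * K) * ‖∑ n ∈ G, ε n • B.e n‖ := by
    rw [s19_ones_eq]
    exact s19_sign_exchange B hQ hK G ε (fun _ => 1) hεnorm (by simp)
  have h4K : (0:ℝ) ≤ 4 * K := by linarith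
  calc α * ‖B.ones G‖ ≤ α * ((4 * K) * ‖∑ n ∈ G, ε n • B.e n‖) :=
      mul_le_mul_of_nonneg_left step2 hα
    _ = (4 * K) * (α * ‖∑ n ∈ G, ε n • B.e n‖) := by ring
    _ ≤ (4 * K) * (2 * K * ‖z‖) := mul_le_mul_of_nonneg_left step1 h4K
    _ = 8 * K ^ 2 * ‖z‖ := by ring

end Aux2


section Main

variable {𝕜 : Type*} {X : Type*} [RCLike 𝕜] [NormedAddCommGroup X] [NormedSpace 𝕜 X]
variable (B : BasisOf 𝕜 X)

lemma s19_spg_qg {seq : ℕ → ℕ} {w : Set ℕ → ℝ≥0∞} (hw0 : w ∅ = 0)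
    (h : B.WSPG seq w) : B.QuasiGreedy := by
  obtain ⟨C, hC1, hC⟩ := h
  refine ⟨1 + C, ?_⟩
  intro x A hne hg
  have h0 := hC x A.card (Finset.card_pos.2 hne) A rfl hg 0 ?_
  · have he : (Finset.range 0).image seq = (∅ : Finset ℕ) := by simp
    rw [he] at h0
    have hproj0 : B.proj (∅ : Finset ℕ) x = 0 := by simp [BasisOf.proj]
    rw [hproj0, sub_zero] at h0
    calc ‖B.proj A x‖ = ‖x - (x - B.proj A x)‖ := by rw [sub_sub_cancel]
      _ ≤ ‖x‖ + ‖x - B.proj A x‖ := norm_sub_le _ _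
      _ ≤ ‖x‖ + C * ‖x‖ := by linarith
      _ = (1 + C) * ‖x‖ := by ring
  · have he : ((Finset.range 0).image seq \ A : Finset ℕ) = ∅ := by simp
    rw [he, Finset.coe_empty, hw0]
    exact zero_le

lemma s19_wpslc_wsuper {seq : ℕ → ℕ} {w : Set ℕ → ℝ≥0∞}
    (h : B.WPSLC seq w) : B.WSuperconservative seq w := by
  obtain ⟨C, hC1, hC⟩ := h
  refine ⟨C, by linarith, ?_⟩
  intro A D hAD ε δ hε hδ
  have h0 := hC 0 (fun n => by simp) A D hAD (fun d _ => by simp)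
    (fun a ha j hj hjr => ?_) ε δ hε hδ
  · simpa using h0
  · rcases hj with hj | hj
    · exact hAD.2.2 a ha j hj hjr
    · simp at hj

lemma s19_wsuper_wcons {seq : ℕ → ℕ} {w : Set ℕ → ℝ≥0∞}
    (h : B.WSuperconservative seq w) : B.WConservative seq w := by
  obtain ⟨C, hC0, hC⟩ := h
  refine ⟨C, hC0, ?_⟩
  intro A D hAD
  have h0 := hC A D hAD (fun _ => 1) (fun _ => 1) (fun n => norm_one) (fun n => norm_one)
  simpa [BasisOf.sgnSum, BasisOf.ones] using h0

lemma s19_spg_wpslc {seq : ℕ → ℕ} (hseq : StrictMono seq) {w : Set ℕ → ℝ≥0∞}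
    (hw0 : w ∅ = 0) (hwpos : ∀ A : Set ℕ, A.Nonempty → 0 < w A)
    (h : B.WSPG seq w) : B.WPSLC seq w := by
  classical
  obtain ⟨C, hC1, hC⟩ := h
  refine ⟨C, hC1, ?_⟩
  intro x hx A D hAD hD0 hord ε δ hε hδ
  obtain ⟨hAseq, hwAD, -⟩ := hAD
  rcases D.eq_empty_or_nonempty with rfl | hDne
  · have hA : A = ∅ := by
      by_contra hA
      obtain ⟨a, ha⟩ := Finset.nonempty_iff_ne_empty.2 hA
      have hpos : 0 < w (↑A) := hwpos _ ⟨a, ha⟩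
      rw [Finset.coe_empty, hw0] at hwAD
      exact absurd (lt_of_lt_of_le hpos hwAD) (lt_irrefl 0)
    subst hA
    have hs : B.sgnSum ε (∅ : Finset ℕ) = 0 := by simp [BasisOf.sgnSum]
    have hs2 : B.sgnSum δ (∅ : Finset ℕ) = 0 := by simp [BasisOf.sgnSum]
    rw [hs, hs2, add_zero]
    calc ‖x‖ = 1 * ‖x‖ := (one_mul _).symm
      _ ≤ C * ‖x‖ := mul_le_mul_of_nonneg_right hC1 (norm_nonneg _)
  have hAx : ∀ a ∈ A, B.coord a x = 0 := by
    intro a ha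
    by_contra hne
    exact lt_irrefl a (hord a ha a (Or.inr hne) (hAseq ha))
  have hADdisj : ∀ a ∈ A, a ∉ D := fun a ha hD =>
    lt_irrefl a (hord a ha a (Or.inl hD) (hAseq ha))
  set I : Finset ℕ := A.preimage seq (hseq.injective.injOn) with hI
  have hImem : ∀ i, i ∈ I ↔ seq i ∈ A := fun i => Finset.mem_preimage
  set m' : ℕ := I.sup (fun i => i + 1) with hm'
  set Bs : Finset ℕ := (Finset.range m').image seq with hBs
  have hcover : A ⊆ Bs := by
    intro a ha
    obtain ⟨i, hi⟩ := hAseq ha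
    have hiI : i ∈ I := (hImem i).2 (hi ▸ ha)
    have hilt : i < m' :=
      lt_of_lt_of_le (Nat.lt_succ_self i) (Finset.le_sup (f := fun i => i + 1) hiI)
    exact Finset.mem_image.2 ⟨i, Finset.mem_range.2 hilt, hi⟩
  have hBle : ∀ b ∈ Bs, ∃ a ∈ A, b ≤ a := by
    intro b hb
    obtain ⟨i, hi, rfl⟩ := Finset.mem_image.1 hb
    have hi' : i < m' := Finset.mem_range.1 hi
    obtain ⟨j, hjI, hij⟩ := Finset.lt_sup_iff.1 hi'
    exact ⟨seq j, (hImem j).1 hjI, hseq.monotone (Nat.lt_succ_iff.1 hij)⟩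
  have hBkey : ∀ b ∈ Bs, ¬ (b ∈ D ∨ B.coord b x ≠ 0) := by
    intro b hb hyp
    obtain ⟨a, ha, hba⟩ := hBle b hb
    obtain ⟨i, hi, rfl⟩ := Finset.mem_image.1 hb
    have := hord a ha (seq i) hyp ⟨i, rfl⟩
    omega
  have hBD : ∀ b ∈ Bs, b ∉ D := fun b hb hd => hBkey b hb (Or.inl hd)
  have hBx : ∀ b ∈ Bs, B.coord b x = 0 := by
    intro b hb
    by_contra hne
    exact hBkey b hb (Or.inr hne)
  set z : X := x + B.sgnSum ε A + B.sgnSum δ D + B.ones (Bs \ A) with hz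
  have hcoordz : ∀ n, B.coord n z = B.coord n x + (if n ∈ A then ε n else 0)
      + (if n ∈ D then δ n else 0) + (if n ∈ Bs \ A then 1 else 0) := by
    intro n
    rw [hz, map_add, map_add, map_add, s19_coord_sgnSum, s19_coord_sgnSum, s19_coord_ones]
  have hzA : ∀ n ∈ A, B.coord n z = ε n := by
    intro n hn
    rw [hcoordz, hAx n hn]
    simp [hn, hADdisj n hn, Finset.mem_sdiff]
  have hzD : ∀ n ∈ D, B.coord n z = δ n := by
    intro n hn
    have hnA : n ∉ A := fun hA' => hADdisj n hA' hn
    have hnB : n ∉ Bs := fun hB => hBD n hB hn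
    rw [hcoordz, hD0 n hn]
    simp [hn, hnA, Finset.mem_sdiff, hnB]
  have hzB : ∀ n ∈ Bs \ A, B.coord n z = 1 := by
    intro n hn
    rcases Finset.mem_sdiff.1 hn with ⟨hnB, hnA⟩
    rw [hcoordz, hBx n hnB]
    simp [hn, hnA, hBD n hnB]
  have hzout : ∀ n, n ∉ A → n ∉ D → n ∉ Bs \ A → B.coord n z = B.coord n x := by
    intro n h1 h2 h3
    rw [hcoordz]
    simp [h1, h2, h3]
  set G : Finset ℕ := D ∪ (Bs \ A) with hG
  have hGne : G.Nonempty := by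
    obtain ⟨d, hd⟩ := hDne
    exact ⟨d, Finset.mem_union_left _ hd⟩
  have hAG : ∀ a ∈ A, a ∉ G := by
    intro a ha hG'
    rcases Finset.mem_union.1 hG' with h' | h'
    · exact hADdisj a ha h'
    · exact (Finset.mem_sdiff.1 h').2 ha
  have hGnorm : ∀ n ∈ G, ‖B.coord n z‖ = 1 := by
    intro n hn
    rcases Finset.mem_union.1 hn with h' | h'
    · rw [hzD n h']; exact hδ n
    · rw [hzB n h']; exact norm_one
  have hGgreedy : B.IsGreedySet z G := by
    intro a ha b hb
    rw [hGnorm a ha]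
    by_cases hbA : b ∈ A
    · rw [hzA b hbA, hε b]
    · have hbD : b ∉ D := fun h' => hb (Finset.mem_union_left _ h')
      have hbB : b ∉ Bs \ A := fun h' => hb (Finset.mem_union_right _ h')
      rw [hzout b hbA hbD hbB]
      exact hx b
  have hDBdisj : Disjoint D (Bs \ A) := by
    rw [Finset.disjoint_left]
    intro d hd hdB
    exact hBD d (Finset.mem_sdiff.1 hdB).1 hd
  have hprojG : B.proj G z = B.sgnSum δ D + B.ones (Bs \ A) := by
    rw [hG, s19_proj_union B _ _ hDBdisj]
    congr 1
    · refine Finset.sum_congr rfl fun n hn => ?_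
      rw [hzD n hn]
    · rw [s19_ones_eq]
      refine Finset.sum_congr rfl fun n hn => ?_
      rw [hzB n hn]
  have hsub1 : z - B.proj G z = x + B.sgnSum ε A := by
    rw [hprojG, hz]; abel
  have hABs : A ∪ (Bs \ A) = Bs := Finset.union_sdiff_of_subset hcover
  have hAdisj : Disjoint A (Bs \ A) := Finset.disjoint_sdiff
  have hprojB : B.proj Bs z = B.sgnSum ε A + B.ones (Bs \ A) := by
    conv_lhs => rw [← hABs]
    rw [s19_proj_union B _ _ hAdisj]
    congr 1
    · refine Finset.sum_congr rfl fun n hn => ?_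
      rw [hzA n hn]
    · rw [s19_ones_eq]
      refine Finset.sum_congr rfl fun n hn => ?_
      rw [hzB n hn]
  have hsub2 : z - B.proj Bs z = x + B.sgnSum δ D := by
    rw [hprojB, hz]; abel
  have hBG : Bs \ G = A := by
    apply Finset.Subset.antisymm
    · intro b hb
      rcases Finset.mem_sdiff.1 hb with ⟨hbB, hbG⟩
      by_contra hbA
      exact hbG (Finset.mem_union_right _ (Finset.mem_sdiff.2 ⟨hbB, hbA⟩))
    · intro a ha
      exact Finset.mem_sdiff.2 ⟨hcover ha, hAG a ha⟩
  have hGB : G \ Bs = D := by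
    apply Finset.Subset.antisymm
    · intro b hb
      rcases Finset.mem_sdiff.1 hb with ⟨hbG, hbB⟩
      rcases Finset.mem_union.1 hbG with h' | h'
      · exact h'
      · exact absurd (Finset.mem_sdiff.1 h').1 hbB
    · intro d hd
      exact Finset.mem_sdiff.2 ⟨Finset.mem_union_left _ hd, fun h' => hBD d h' hd⟩
  have happ := hC z G.card (Finset.card_pos.2 hGne) G rfl hGgreedy m' ?_
  · rw [← hBs] at happ
    rw [hsub1, hsub2] at happ
    exact happ
  · rw [← hBs, hBG, hGB]
    exact hwAD

lemma s19_qg_cons_wspg {seq : ℕ → ℕ} (hseq : StrictMono seq) {w : Set ℕ → ℝ≥0∞}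
    (hw0 : w ∅ = 0) (hwpos : ∀ A : Set ℕ, A.Nonempty → 0 < w A)
    (hQG : B.QuasiGreedy) (hcons : B.WConservative seq w) : B.WSPG seq w := by
  classical
  obtain ⟨K₀, hK₀⟩ := hQG
  set K : ℝ := max K₀ 1 with hKdef
  have hK : 1 ≤ K := le_max_right _ _
  have hK0 : (0:ℝ) ≤ K := by linarith
  have hQ : B.QuasiGreedyWith K := by
    intro x A hne hg
    exact (hK₀ x A hne hg).trans
      (mul_le_mul_of_nonneg_right (le_max_left _ _) (norm_nonneg _))
  obtain ⟨Cc, hCc0, hCc⟩ := hcons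
  have hCbig : (1:ℝ) ≤ 1 + K + 32 * K ^ 3 * Cc := by
    have h1 := mul_nonneg (pow_nonneg hK0 3) hCc0.le
    linarith
  refine ⟨1 + K + 32 * K ^ 3 * Cc, hCbig, ?_⟩
  intro x m hm A hcard hgA m' hw
  set Bs : Finset ℕ := (Finset.range m').image seq with hBs
  set y : X := x - B.proj Bs x with hy
  have hcoordy : ∀ n, B.coord n y = if n ∈ Bs then 0 else B.coord n x :=
    fun n => s19_coord_sub_proj B x Bs n
  by_cases hAB : (A \ Bs).Nonempty
  case neg =>
    have hA : A \ Bs = ∅ := Finset.not_nonempty_iff_eq_empty.1 hAB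
    have hB0 : Bs \ A = ∅ := by
      by_contra hB
      obtain ⟨b, hb⟩ := Finset.nonempty_iff_ne_empty.2 hB
      have hpos : 0 < w (↑(Bs \ A)) := hwpos _ ⟨b, hb⟩
      rw [hA, Finset.coe_empty, hw0] at hw
      exact absurd (lt_of_lt_of_le hpos hw) (lt_irrefl 0)
    have hAeq : A = Bs :=
      Finset.Subset.antisymm (Finset.sdiff_eq_empty_iff_subset.1 hA)
        (Finset.sdiff_eq_empty_iff_subset.1 hB0)
    rw [hAeq, ← hy]
    nlinarith [norm_nonneg y]
  case pos =>
  obtain ⟨a₀, ha₀, hmin⟩ := Finset.exists_min_image (A \ Bs) (fun n => ‖B.coord n x‖) hAB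
  set α : ℝ := ‖B.coord a₀ x‖ with hα
  have hα0 : 0 ≤ α := norm_nonneg _
  have ha₀A : a₀ ∈ A := (Finset.mem_sdiff.1 ha₀).1
  have hiden : x - B.proj A x = y + B.proj (Bs \ A) x - B.proj (A \ Bs) x := by
    have h1 : B.proj (A ∪ Bs) x = B.proj A x + B.proj (Bs \ A) x := by
      rw [← Finset.union_sdiff_self_eq_union, s19_proj_union B _ _ Finset.disjoint_sdiff]
    have h2 : B.proj (A ∪ Bs) x = B.proj Bs x + B.proj (A \ Bs) x := by
      rw [Finset.union_comm, ← Finset.union_sdiff_self_eq_union,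
        s19_proj_union B _ _ Finset.disjoint_sdiff]
    have h3 : B.proj A x + B.proj (Bs \ A) x = B.proj Bs x + B.proj (A \ Bs) x :=
      h1.symm.trans h2
    have h4 : x - B.proj A x - (y + B.proj (Bs \ A) x - B.proj (A \ Bs) x)
        = (B.proj Bs x + B.proj (A \ Bs) x) - (B.proj A x + B.proj (Bs \ A) x) := by
      rw [hy]; abel
    rw [← sub_eq_zero, h4, ← h3, sub_self]
  have hgy : B.IsGreedySet y (A \ Bs) := by
    intro a ha b hb
    rcases Finset.mem_sdiff.1 ha with ⟨haA, haB⟩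
    rw [hcoordy, hcoordy, if_neg haB]
    by_cases hbB : b ∈ Bs
    · rw [if_pos hbB]; simp
    · rw [if_neg hbB]
      by_cases hbA : b ∈ A
      · exact absurd (Finset.mem_sdiff.2 ⟨hbA, hbB⟩) hb
      · exact hgA a haA b hbA
  have hproj1 : B.proj (A \ Bs) y = B.proj (A \ Bs) x := by
    refine Finset.sum_congr rfl fun n hn => ?_
    rw [hcoordy, if_neg (Finset.mem_sdiff.1 hn).2]
  have h1 : ‖B.proj (A \ Bs) x‖ ≤ K * ‖y‖ := by
    rw [← hproj1]
    exact s19_projG_le B hQ hK y (A \ Bs) hgy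
  have hαy : ∀ n ∈ A \ Bs, α ≤ ‖B.coord n y‖ := by
    intro n hn
    rw [hcoordy, if_neg (Finset.mem_sdiff.1 hn).2]
    exact hmin n hn
  have hupper : ∀ n ∈ Bs \ A, ‖B.coord n x‖ ≤ α := by
    intro n hn
    exact hgA a₀ ha₀A n (Finset.mem_sdiff.1 hn).2
  have h3a : ‖B.proj (Bs \ A) x‖ ≤ 4 * K * α * ‖B.ones (Bs \ A)‖ :=
    s19_upper_flat B hQ hK (fun n => B.coord n x) (Bs \ A) α hα0 hupper
  have hWT : WTPair w seq (Bs \ A) (A \ Bs) := by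
    refine ⟨?_, hw, ?_⟩
    · intro b hb
      have hb' : b ∈ Bs \ A := hb
      obtain ⟨i, _, rfl⟩ := Finset.mem_image.1 (Finset.mem_sdiff.1 hb').1
      exact ⟨i, rfl⟩
    · intro b hb d hd hdr
      obtain ⟨i, hi, rfl⟩ := Finset.mem_image.1 (Finset.mem_sdiff.1 hb).1
      obtain ⟨j, rfl⟩ := hdr
      have hj : ¬ j < m' := by
        intro hj'
        exact (Finset.mem_sdiff.1 hd).2
          (Finset.mem_image.2 ⟨j, Finset.mem_range.2 hj', rfl⟩)
      exact hseq (lt_of_lt_of_le (Finset.mem_range.1 hi) (not_lt.1 hj))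
  have h3b : ‖B.ones (Bs \ A)‖ ≤ Cc * ‖B.ones (A \ Bs)‖ := hCc _ _ hWT
  have h3c : α * ‖B.ones (A \ Bs)‖ ≤ 8 * K ^ 2 * ‖y‖ :=
    s19_trunc_bound B hQ hK y (A \ Bs) hgy α hα0 hαy
  have h3 : ‖B.proj (Bs \ A) x‖ ≤ 32 * K ^ 3 * Cc * ‖y‖ := by
    have hc1 : (0:ℝ) ≤ 4 * K * α := by nlinarith
    have hc2 : (0:ℝ) ≤ 4 * K * Cc := by nlinarith
    calc ‖B.proj (Bs \ A) x‖ ≤ 4 * K * α * ‖B.ones (Bs \ A)‖ := h3a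
      _ ≤ 4 * K * α * (Cc * ‖B.ones (A \ Bs)‖) := mul_le_mul_of_nonneg_left h3b hc1
      _ = 4 * K * Cc * (α * ‖B.ones (A \ Bs)‖) := by ring
      _ ≤ 4 * K * Cc * (8 * K ^ 2 * ‖y‖) := mul_le_mul_of_nonneg_left h3c hc2
      _ = 32 * K ^ 3 * Cc * ‖y‖ := by ring
  rw [hiden]
  calc ‖y + B.proj (Bs \ A) x - B.proj (A \ Bs) x‖
      ≤ ‖y + B.proj (Bs \ A) x‖ + ‖B.proj (A \ Bs) x‖ := norm_sub_le _ _
    _ ≤ (‖y‖ + ‖B.proj (Bs \ A) x‖) + ‖B.proj (A \ Bs) x‖ :=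
        add_le_add_left (norm_add_le _ _) _
    _ ≤ (‖y‖ + 32 * K ^ 3 * Cc * ‖y‖) + K * ‖y‖ :=
        add_le_add (add_le_add le_rfl h3) h1
    _ = (1 + K + 32 * K ^ 3 * Cc) * ‖y‖ := by ring

end Main

/-- For a weight on sets `ω`, being ω-(𝐧, strong partially greedy) is
equivalent to being quasi-greedy together with any one of: ω-(𝐧, PSLC),
ω-(𝐧, superconservative), ω-(𝐧, conservative). -/
theorem statement19 {𝕜 X : Type*} [RCLike 𝕜] [NormedAddCommGroup X] [NormedSpace 𝕜 X]
    [CompleteSpace X] (B : BasisOf 𝕜 X) (seq : ℕ → ℕ) (hseq : StrictMono seq)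
    (w : Set ℕ → ℝ≥0∞) (hw0 : w ∅ = 0) (hwpos : ∀ A : Set ℕ, A.Nonempty → 0 < w A) :
    (B.WSPG seq w ↔ B.QuasiGreedy ∧ B.WPSLC seq w) ∧
    (B.WSPG seq w ↔ B.QuasiGreedy ∧ B.WSuperconservative seq w) ∧
    (B.WSPG seq w ↔ B.QuasiGreedy ∧ B.WConservative seq w) := by
  have hqg : B.WSPG seq w → B.QuasiGreedy := s19_spg_qg B hw0
  have hpslc : B.WSPG seq w → B.WPSLC seq w := s19_spg_wpslc B hseq hw0 hwpos
  have hsuper : B.WPSLC seq w → B.WSuperconservative seq w := s19_wpslc_wsuper B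
  have hcons : B.WSuperconservative seq w → B.WConservative seq w := s19_wsuper_wcons B
  have hback : B.QuasiGreedy → B.WConservative seq w → B.WSPG seq w :=
    fun h1 h2 => s19_qg_cons_wspg B hseq hw0 hwpos h1 h2
  refine ⟨⟨fun h => ⟨hqg h, hpslc h⟩, fun ⟨h1, h2⟩ => hback h1 (hcons (hsuper h2))⟩,
    ⟨fun h => ⟨hqg h, hsuper (hpslc h)⟩, fun ⟨h1, h2⟩ => hback h1 (hcons h2)⟩,
    ⟨fun h => ⟨hqg h, hcons (hsuper (hpslc h))⟩, fun ⟨h1, h2⟩ => hback h1 h2⟩⟩
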